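/- Let Θ ∈ ℳ^{p×p} and let Σ be a symmetric p×p matrix with all entries nonnegative and unit diagonal (Σ_{jj} = 1 for all j). Then tr(ΘΣ) ≥ (1 − max_{j≠k} Σ_{jk})·tr(Θ). -/

import Mathlib

open MeasureTheory Matrix Real

namespace CovEst

/-- The convex cone of symmetric positive semidefinite matrices with
nonpositive off-diagonal entries (symmetric `M`-matrices). -/
def Mmat (m : Type*) [Fintype m] : Set (Matrix m m ℝ) :=
  {A | A.PosSemidef ∧ ∀ i j, i ≠ j → A i j ≤ 0}

/-- Frobenius (trace) inner product `⟨A, B⟩ = tr (Aᵀ B)` on matrices. -/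
noncomputable def mip {m : Type*} [Fintype m] (A B : Matrix m m ℝ) : ℝ :=
  (Aᵀ * B).trace

/-- The symmetrized Stein (divergence) loss
`L(Θ, Θ*) = (1/(2p)) ⟨Θ - Θ*, (Θ*)⁻¹ - Θ⁻¹⟩`. -/
noncomputable def stein {m : Type*} [Fintype m] [DecidableEq m] (T Ts : Matrix m m ℝ) : ℝ :=
  (2 * (Fintype.card m : ℝ))⁻¹ * mip (T - Ts) (Ts⁻¹ - T⁻¹)

/-- Maximal correlation `max_{j ≠ k} Σ_{jk} / √(Σ_{jj} Σ_{kk})` of a covariance matrix. -/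
noncomputable def maxCorr {m : Type*} (V : Matrix m m ℝ) : ℝ :=
  sSup {x | ∃ j k, j ≠ k ∧ x = V j k / Real.sqrt (V j j * V k k)}

/-- `γ(Σ) = (1 - max_{j ≠ k} Σ_{jk}/√(Σ_{jj}Σ_{kk}))⁻¹`. -/
noncomputable def gammaV {m : Type*} (V : Matrix m m ℝ) : ℝ := (1 - maxCorr V)⁻¹

/-- Largest off-diagonal entry. -/
noncomputable def maxOffDiag {m : Type*} (V : Matrix m m ℝ) : ℝ :=
  sSup {x | ∃ j k, j ≠ k ∧ x = V j k}

/-- Entrywise sup-norm `‖A‖_∞ = max_{j,k} |A_{jk}|`. -/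
noncomputable def norminf {m l : Type*} (A : Matrix m l ℝ) : ℝ :=
  sSup {x | ∃ i j, x = |A i j|}

/-- Sample covariance matrix `S = n⁻¹ Xᵀ X`. -/
noncomputable def sampleCov {n p : ℕ} (X : Fin n → Fin p → ℝ) : Matrix (Fin p) (Fin p) ℝ :=
  (n : ℝ)⁻¹ • ((Matrix.of X)ᵀ * Matrix.of X)

/-- The (negative log-likelihood) objective `⟨Θ, S⟩ - log det Θ`. -/
noncomputable def objective {m : Type*} [Fintype m] [DecidableEq m] (S T : Matrix m m ℝ) : ℝ :=
  mip T S - Real.log T.det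

/-- `T` is the sign-constrained Gaussian MLE for the sample covariance `S`:
it minimizes `⟨Θ, S⟩ - log det Θ` over positive definite `Θ ∈ ℳ`. -/
def IsSignMLE {m : Type*} [Fintype m] [DecidableEq m] (S T : Matrix m m ℝ) : Prop :=
  T ∈ Mmat m ∧ T.PosDef ∧ ∀ T' ∈ Mmat m, T'.PosDef → objective S T ≤ objective S T'

/-- Density of the `N(0, V)` distribution on `ℝᵖ` (with respect to Lebesgue measure). -/
noncomputable def gaussPdf {p : ℕ} (V : Matrix (Fin p) (Fin p) ℝ) (x : Fin p → ℝ) : ENNReal :=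
  ENNReal.ofReal ((((2 * Real.pi) ^ p * V.det) ^ (-(1 : ℝ) / 2)) *
    Real.exp (-(x ⬝ᵥ (V⁻¹ *ᵥ x)) / 2))

/-- The centered multivariate Gaussian measure `N(0, V)` on `ℝᵖ`. -/
noncomputable def gaussMeasure {p : ℕ} (V : Matrix (Fin p) (Fin p) ℝ) : Measure (Fin p → ℝ) :=
  volume.withDensity (gaussPdf V)

/-- Law of a data matrix `X ∈ ℝ^{n×p}` with i.i.d. rows `N(0, V)`. -/
noncomputable def model (n : ℕ) {p : ℕ} (V : Matrix (Fin p) (Fin p) ℝ) :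
    Measure (Fin n → Fin p → ℝ) :=
  Measure.pi fun _ : Fin n => gaussMeasure V

/-- The class `𝒟` of diagonal matrices with strictly positive diagonal. -/
def posDiag (p : ℕ) : Set (Matrix (Fin p) (Fin p) ℝ) :=
  {T | ∃ d : Fin p → ℝ, (∀ j, 0 < d j) ∧ T = Matrix.diagonal d}

/-- Largest (real) eigenvalue of a matrix. -/
noncomputable def lamMax {m : Type*} [Fintype m] (A : Matrix m m ℝ) : ℝ :=
  sSup {t | ∃ v : m → ℝ, v ≠ 0 ∧ A *ᵥ v = t • v}

/-- Smallest (real) eigenvalue of a matrix. -/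
noncomputable def lamMin {m : Type*} [Fintype m] (A : Matrix m m ℝ) : ℝ :=
  sInf {t | ∃ v : m → ℝ, v ≠ 0 ∧ A *ᵥ v = t • v}

/-- Spectral norm (largest singular value) of a matrix. -/
noncomputable def specNorm {m : Type*} [Fintype m] (A : Matrix m m ℝ) : ℝ :=
  sSup {t | ∃ v : m → ℝ, (∑ i, (v i) ^ 2) = 1 ∧ t = Real.sqrt (∑ i, ((A *ᵥ v) i) ^ 2)}

/-- Squared Frobenius norm. -/
noncomputable def frobSq {m l : Type*} [Fintype m] [Fintype l] (A : Matrix m l ℝ) : ℝ :=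
  ∑ i, ∑ j, (A i j) ^ 2


/-- Matrices inherit the product measurable structure. -/
instance matrixMeasurableSpace {m l : Type*} : MeasurableSpace (Matrix m l ℝ) :=
  MeasurableSpace.pi


/-- For `Θ ∈ ℳ` and a symmetric entrywise-nonnegative matrix `Σ` with unit
diagonal, `tr(ΘΣ) ≥ (1 - max_{j≠k} Σ_{jk}) tr Θ`. -/
theorem stmt_16 (p : ℕ) (Θ V : Matrix (Fin p) (Fin p) ℝ) (hΘ : Θ ∈ Mmat (Fin p))
    (hsym : V.IsSymm) (hnn : ∀ i j, 0 ≤ V i j) (hdiag : ∀ j, V j j = 1) :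
    (1 - maxOffDiag V) * Θ.trace ≤ (Θ * V).trace := by
  have h1 : (Θ * V).trace = ∑ i, ∑ k, Θ i k * V k i := by
    simp [Matrix.trace, Matrix.diag, Matrix.mul_apply]
  by_cases hp : ∃ j k : Fin p, j ≠ k
  · obtain ⟨j0, k0, hjk⟩ := hp
    set M := maxOffDiag V with hMdef
    have hfin : ({x | ∃ j k, j ≠ k ∧ x = V j k} : Set ℝ).Finite := by
      apply (Set.finite_range (fun jk : Fin p × Fin p => V jk.1 jk.2)).subset
      rintro x ⟨j, k, _, rfl⟩; exact ⟨(j, k), rfl⟩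
    have hbdd : BddAbove {x | ∃ j k, j ≠ k ∧ x = V j k} := hfin.bddAbove
    have hVle : ∀ j k, j ≠ k → V j k ≤ M := fun j k h =>
      le_csSup hbdd ⟨j, k, h, rfl⟩
    have hM0 : 0 ≤ M := le_trans (hnn j0 k0) (hVle j0 k0 hjk)
    have hS : 0 ≤ ∑ i, ∑ k, Θ i k := by
      have := hΘ.1.dotProduct_mulVec_nonneg (fun _ => 1)
      simpa [dotProduct, Matrix.mulVec] using this
    have h2 : ∀ i k : Fin p, M * Θ i k + (if i = k then (1 - M) * Θ i i else 0)
        ≤ Θ i k * V k i := by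
      intro i k
      by_cases h : i = k
      · subst h; simp [hdiag]; linarith
      · have hle : V k i ≤ M := hVle k i (fun hh => h hh.symm)
        have hneg : Θ i k ≤ 0 := hΘ.2 i k h
        simp only [h, if_false, add_zero]
        nlinarith
    have h3 : ∑ i, ∑ k, (M * Θ i k + (if i = k then (1 - M) * Θ i i else 0))
        ≤ ∑ i, ∑ k, Θ i k * V k i :=
      Finset.sum_le_sum fun i _ => Finset.sum_le_sum fun k _ => h2 i k
    have h4 : ∑ i, ∑ k, (M * Θ i k + (if i = k then (1 - M) * Θ i i else 0))
        = M * (∑ i, ∑ k, Θ i k) + (1 - M) * Θ.trace := by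
      simp [Finset.sum_add_distrib, Finset.mul_sum, Matrix.trace, Matrix.diag,
        Finset.sum_ite_eq']
    rw [h1]
    calc (1 - M) * Θ.trace ≤ M * (∑ i, ∑ k, Θ i k) + (1 - M) * Θ.trace := by nlinarith
    _ ≤ ∑ i, ∑ k, Θ i k * V k i := by rw [← h4]; exact h3
  · have hall : ∀ j k : Fin p, j = k := fun j k => by
      by_contra h; exact hp ⟨j, k, h⟩
    have hM : maxOffDiag V = 0 := by
      have : {x | ∃ j k, j ≠ k ∧ x = V j k} = (∅ : Set ℝ) := by
        ext x; simp only [Set.mem_setOf_eq, Set.mem_empty_iff_false, iff_false]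
        rintro ⟨j, k, h, _⟩; exact h (hall j k)
      rw [maxOffDiag, this, Real.sSup_empty]
    have htr : (Θ * V).trace = Θ.trace := by
      rw [h1, Matrix.trace]
      apply Finset.sum_congr rfl
      intro i _
      rw [Finset.sum_eq_single i (fun k _ hk => absurd (hall k i) hk)
        (fun h => absurd (Finset.mem_univ i) h)]
      simp [hdiag]
    rw [hM, htr]; simp

end CovEst
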